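/- arXiv:0805.3824 — 3 statements merged into one kernel-verified Lean document; each statement's English description precedes it below -/
import Mathlib

section
/- Let ρ ∈ ℕ with N ≥ n and let 𝒞 ⊆ 𝔽_q^{n×m} be a code with at least two codewords such that no two distinct codewords of 𝒞 have the same row space. Then 𝒞 is guaranteed to correct t packet errors under rank deficiency ρ (i.e., 𝒞 is t-discrepancy-correcting for Δ_ρ) if and only if d_I(⟨𝒞⟩) > 2t + ρ, where d_I(⟨𝒞⟩) is the minimum injection distance between row spaces of distinct codewords. -/
open LinearMap Submodule Module Set Matrix
set_option linter.unusedSectionVars false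
set_option maxHeartbeats 1000000



/-- The noncoherent discrepancy
`Δ_ρ(X,Y) = min { rank (Y − AX) : A ∈ 𝔽_q^{N×n}, rank A ≥ n − ρ }`. -/
noncomputable def discRho {K : Type*} [Field K] [Fintype K] {n m N : ℕ}
    (ρ : ℕ) (X : Matrix (Fin n) (Fin m) K) (Y : Matrix (Fin N) (Fin m) K) : ℕ :=
  sInf {r : ℕ | ∃ A : Matrix (Fin N) (Fin n) K, n - ρ ≤ A.rank ∧ r = (Y - A * X).rank}

/-- The row space of a matrix: the span of its rows in `𝔽_q^m`. -/
noncomputable def rowSpace {K : Type*} [Field K] {a b : ℕ}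
    (X : Matrix (Fin a) (Fin b) K) : Submodule K (Fin b → K) :=
  Submodule.span K (Set.range fun i => X i)

/-- The injection distance between two subspaces of `𝔽_q^m`:
`d_I(U,V) = max {dim U, dim V} − dim (U ∩ V)`. -/
noncomputable def injDist {K : Type*} [Field K] {m : ℕ}
    (U V : Submodule K (Fin m → K)) : ℕ :=
  max (Module.finrank K U) (Module.finrank K V) - Module.finrank K ↥(U ⊓ V)

/-- `d_I(⟨𝒞⟩)`: the minimum injection distance between the row spaces of
distinct codewords. -/
noncomputable def injDistCode {K : Type*} [Field K] [Fintype K] {n m : ℕ}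
    (C : Set (Matrix (Fin n) (Fin m) K)) : ℕ :=
  sInf {e : ℕ | ∃ X ∈ C, ∃ X' ∈ C, X ≠ X' ∧ e = injDist (rowSpace X) (rowSpace X')}

/-- A code `C` is `t`-discrepancy-correcting for a discrepancy function `Δ` if
no output is within discrepancy `t` of two distinct codewords. -/
def Correcting {α β : Type*} (Δ : α → β → ℕ) (C : Set α) (t : ℕ) : Prop :=
  ∀ x ∈ C, ∀ x' ∈ C, x ≠ x' → ∀ y : β, ¬(Δ x y ≤ t ∧ Δ x' y ≤ t)




section aux
variable {K : Type*} [Field K] {V W : Type*} [AddCommGroup V] [Module K V]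
  [AddCommGroup W] [Module K W] [FiniteDimensional K V] [FiniteDimensional K W]

lemma FRK (f : V →ₗ[K] W) (p : Submodule K V) :
    finrank K (p.map f) + finrank K ↥(p ⊓ ker f) = finrank K p := by
  have h := LinearMap.finrank_range_add_finrank_ker (f.domRestrict p)
  rw [LinearMap.range_domRestrict] at h
  have e : ker (f.domRestrict p) ≃ₗ[K] ↥(p ⊓ ker f) := by
    rw [ker_domRestrict]
    have h1 : comap p.subtype (ker f) = comap p.subtype (p ⊓ ker f) := by
      ext x; simp [x.2]
    rw [h1]
    exact Submodule.comapSubtypeEquivOfLe inf_le_left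
  rw [e.finrank_eq] at h
  simpa using h

lemma INT (U D T : Submodule K W) :
    finrank K ↥(U ⊓ (D ⊔ T)) ≤ finrank K D + finrank K ↥(U ⊓ T) := by
  set Wm := U ⊓ (D ⊔ T) with hW
  have h1 : finrank K ↥(Wm ⊔ T) + finrank K ↥(Wm ⊓ T) = finrank K Wm + finrank K T :=
    Submodule.finrank_sup_add_finrank_inf_eq _ _
  have h2 : Wm ⊓ T = U ⊓ T := by
    have hx : (D ⊔ T) ⊓ T = T := inf_eq_right.2 le_sup_right
    rw [hW, inf_assoc, hx]
  rw [h2] at h1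
  have h3 : finrank K ↥(Wm ⊔ T) ≤ finrank K D + finrank K T := by
    calc finrank K ↥(Wm ⊔ T) ≤ finrank K ↥(D ⊔ T) :=
          Submodule.finrank_mono (sup_le (hW ▸ inf_le_right) le_sup_right)
      _ ≤ finrank K D + finrank K T := by
          have := Submodule.finrank_sup_add_finrank_inf_eq D T
          omega
  omega

lemma COMPL {P T : Submodule K W} (h : P ≤ T) :
    ∃ Q ≤ T, P ⊓ Q = ⊥ ∧ P ⊔ Q = T := by
  obtain ⟨Q', hQ'⟩ := Submodule.exists_isCompl (comap T.subtype P)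
  refine ⟨Q'.map T.subtype, map_subtype_le _ _, ?_, ?_⟩
  · have : P = (comap T.subtype P).map T.subtype := by
      rw [map_comap_subtype, inf_eq_right.2 h]
    rw [this, ← Submodule.map_inf _ T.injective_subtype, hQ'.inf_eq_bot, Submodule.map_bot]
  · have : P = (comap T.subtype P).map T.subtype := by
      rw [map_comap_subtype, inf_eq_right.2 h]
    rw [this, ← Submodule.map_sup, hQ'.sup_eq_top, Submodule.map_top, range_subtype]

end aux

section rb
variable {K : Type*} [Field K] {V W : Type*} [AddCommGroup V] [Module K V]
  [AddCommGroup W] [Module K W] [FiniteDimensional K V] [FiniteDimensional K W]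

lemma RANKBOOST (a : V →ₗ[K] W) (S : Submodule K W) :
    ∃ κ : V →ₗ[K] W, LinearMap.range κ ≤ S ∧
      min (finrank K V) (finrank K ↥(LinearMap.range a ⊔ S)) ≤ finrank K ↥(LinearMap.range (a + κ)) := by
  classical
  set A := LinearMap.range a with hA
  obtain ⟨C, hC⟩ := Submodule.exists_isCompl (ker a)
  obtain ⟨S₁, hS₁S, hS₁b, hS₁t⟩ := COMPL (inf_le_right : A ⊓ S ≤ S)
  set k₁ := finrank K ↥(ker a) with hk₁
  set k₂ := finrank K ↥S₁ with hk₂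
  set b₁ := Module.finBasis K ↥(ker a)
  set b₂ := Module.finBasis K ↥S₁
  set f₀ : Fin k₁ → W := fun i => if h : (i : ℕ) < k₂ then ((b₂ ⟨i, h⟩ : ↥S₁) : W) else 0
    with hf₀
  set ψ := b₁.constr K f₀ with hψ
  set proj := (ker a).projectionOnto C hC with hproj
  set κ := ψ ∘ₗ (proj : V →ₗ[K] ↥(ker a)) with hκ
  have hκS : LinearMap.range κ ≤ S := by
    refine le_trans (range_comp_le_range _ _) ?_
    rw [hψ, Basis.constr_range]
    refine le_trans (span_le.2 ?_) hS₁S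
    rintro x ⟨i, rfl⟩
    rw [hf₀]
    by_cases h : (i : ℕ) < k₂
    · simp only [h, dif_pos]; exact (b₂ ⟨i, h⟩).2
    · simp only [h, dif_neg, not_false_iff]; exact S₁.zero_mem
  refine ⟨κ, hκS, ?_⟩
  set d := min k₁ k₂ with hd
  set v : Fin d → W := fun i =>
    ((b₂ ⟨i, lt_of_lt_of_le i.2 (min_le_right _ _)⟩ : ↥S₁) : W) with hv
  -- A ≤ LinearMap.range (a + κ)
  have hAle : A ≤ LinearMap.range (a + κ) := by
    intro y hy
    obtain ⟨x, rfl⟩ := hy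
    have hx : x ∈ ker a ⊔ C := by rw [hC.sup_eq_top]; trivial
    obtain ⟨p, hp, c, hc, hpc⟩ := Submodule.mem_sup.1 hx
    refine ⟨(c : V), ?_⟩
    have hac : a c = a x := by
      have h0 : a p = 0 := hp
      rw [← hpc]; simp [h0]
    have hκc : κ c = 0 := by
      rw [hκ]
      simp only [LinearMap.comp_apply, hproj]
      rw [Submodule.projectionOnto_apply_of_mem_right hC hc]
      simp
    simp [hac, hκc]
  -- v i ∈ LinearMap.range (a + κ)
  have hvle : ∀ i : Fin d, v i ∈ LinearMap.range (a + κ) := by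
    intro i
    have hik : (i : ℕ) < k₁ := lt_of_lt_of_le i.2 (min_le_left _ _)
    set z := b₁ ⟨i, hik⟩ with hz
    refine ⟨(z : V), ?_⟩
    have h1 : a (z : V) = 0 := z.2
    have h2 : κ (z : V) = v i := by
      rw [hκ]
      simp only [LinearMap.comp_apply]
      rw [hproj]
      rw [Submodule.projectionOnto_apply_left hC z]
      rw [hψ, hz, Basis.constr_basis]
      rw [hf₀]
      simp only [lt_of_lt_of_le i.2 (min_le_right k₁ k₂), dif_pos]; rfl
    simp [h1, h2]
  -- linear independence of v
  have hvind : LinearIndependent K v := by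
    have h1 : LinearIndependent K (fun i : Fin k₂ => ((b₂ i : ↥S₁) : W)) :=
      b₂.linearIndependent.map' S₁.subtype (Submodule.ker_subtype _)
    exact h1.comp (fun i : Fin d => ⟨i, lt_of_lt_of_le i.2 (min_le_right _ _)⟩)
      (fun i j h => by
        apply Fin.ext
        simpa using congrArg (fun x : Fin k₂ => (x : ℕ)) h)
  have hspanv : finrank K ↥(span K (Set.range v)) = d := (finrank_span_eq_card hvind).trans (Fintype.card_fin d)
  have hsv : span K (Set.range v) ≤ S₁ := by
    rw [span_le]; rintro x ⟨i, rfl⟩; exact (b₂ _).2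
  have hsub : A ⊔ span K (Set.range v) ≤ LinearMap.range (a + κ) := by
    refine sup_le hAle ?_
    rw [span_le]; rintro x ⟨i, rfl⟩; exact hvle i
  have hdisj : A ⊓ span K (Set.range v) = ⊥ := by
    rw [← le_bot_iff, ← hS₁b]
    exact le_inf (le_inf inf_le_left (le_trans inf_le_right (hsv.trans hS₁S)))
      (le_trans inf_le_right hsv)
  have hsum : finrank K ↥(A ⊔ span K (Set.range v)) = finrank K ↥A + d := by
    have := Submodule.finrank_sup_add_finrank_inf_eq A (span K (Set.range v))
    rw [hdisj] at this
    simp only [finrank_bot, add_zero] at this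
    omega
  have hmono : finrank K ↥(A ⊔ span K (Set.range v)) ≤ finrank K ↥(LinearMap.range (a + κ)) :=
    Submodule.finrank_mono hsub
  have hrn : finrank K ↥A + k₁ = finrank K V := by
    rw [hA]; exact LinearMap.finrank_range_add_finrank_ker a
  have hAS : finrank K ↥(A ⊔ S) + finrank K ↥(A ⊓ S) = finrank K ↥A + finrank K S :=
    Submodule.finrank_sup_add_finrank_inf_eq A S
  have hSsplit : finrank K S = finrank K ↥(A ⊓ S) + k₂ := by
    have h1 := Submodule.finrank_sup_add_finrank_inf_eq (A ⊓ S) S₁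
    rw [hS₁t, hS₁b] at h1
    simp only [finrank_bot, add_zero] at h1
    omega
  omega

end rb

section aux2
variable {K : Type*} [Field K] {V W : Type*} [AddCommGroup V] [Module K V]
  [AddCommGroup W] [Module K W] [FiniteDimensional K V] [FiniteDimensional K W]

lemma SPANRANGE {d : ℕ} (h : Fin d → W) :
    finrank K ↥(span K (Set.range h)) ≤ d := by
  have : span K (Set.range h) = LinearMap.range ((Pi.basisFun K (Fin d)).constr K h) := by
    rw [Basis.constr_range]
  rw [this]
  calc finrank K ↥(LinearMap.range ((Pi.basisFun K (Fin d)).constr K h))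
      ≤ finrank K (Fin d → K) := LinearMap.finrank_range_le _
    _ = d := Module.finrank_fin_fun K

lemma RANGESUB (u v : V →ₗ[K] W) :
    LinearMap.range (u - v) ≤ LinearMap.range u ⊔ LinearMap.range v := by
  rintro y ⟨x, rfl⟩
  have hx : (u - v) x = u x + (-(v x)) := by simp [sub_eq_add_neg]
  rw [hx]
  exact Submodule.add_mem _ (Submodule.mem_sup_left ⟨x, rfl⟩)
    (Submodule.mem_sup_right (neg_mem ⟨x, rfl⟩))

end aux2

section ach
variable {K : Type*} [Field K] {V V' W' : Type*} [AddCommGroup V] [Module K V]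
  [AddCommGroup V'] [Module K V'] [AddCommGroup W'] [Module K W']
  [FiniteDimensional K V] [FiniteDimensional K V'] [FiniteDimensional K W']

lemma ACH (f : V →ₗ[K] W') (g : V' →ₗ[K] W') (t ρ : ℕ)
    (hN : finrank K V ≤ finrank K V')
    (h1 : finrank K (LinearMap.range f) ≤
      finrank K ↥(LinearMap.range f ⊓ LinearMap.range g) + t + ρ)
    (h2 : finrank K (LinearMap.range g) ≤
      finrank K ↥(LinearMap.range f ⊓ LinearMap.range g) + t) :
    ∃ β : V' →ₗ[K] V, finrank K V - ρ ≤ finrank K ↥(LinearMap.range β) ∧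
      finrank K ↥(LinearMap.range (g - f ∘ₗ β)) ≤ t := by
  classical
  set U := LinearMap.range f with hU
  set T := LinearMap.range g with hT
  set P := U ⊓ T with hP
  set n := finrank K V with hn
  set r := finrank K ↥U with hr
  set y := finrank K ↥T with hy
  set w := finrank K ↥P with hw
  -- projection onto P
  obtain ⟨P', hP'⟩ := Submodule.exists_isCompl P
  set e : W' →ₗ[K] W' := P.subtype ∘ₗ P.projectionOnto P' hP' with he
  have heP : ∀ x ∈ P, e x = x := fun x hx => by
    simp [he, Submodule.projectionOnto_apply_left hP' ⟨x, hx⟩]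
  have herange : ∀ x, e x ∈ P := fun x => (P.projectionOnto P' hP' x).2
  set Q := Submodule.map (LinearMap.id - e) T with hQ
  set qd := finrank K ↥Q with hqd
  have hqdle : qd + w ≤ y := by
    have h := FRK (LinearMap.id - e) T
    rw [← hQ, ← hqd, ← hy] at h
    have hPle : P ≤ T ⊓ ker (LinearMap.id - e) := by
      refine le_inf inf_le_right ?_
      intro x hx
      simp [LinearMap.mem_ker, heP x hx]
    have h2' := Submodule.finrank_mono hPle
    rw [← hw] at h2'
    omega
  -- complement of P in U
  obtain ⟨R, hRU, hPRb, hPRt⟩ := COMPL (inf_le_left : P ≤ U)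
  set rd := finrank K ↥R with hrd
  have hrdw : w + rd = r := by
    have h := Submodule.finrank_sup_add_finrank_inf_eq P R
    rw [hPRt, hPRb] at h
    simp only [finrank_bot, add_zero] at h
    omega
  set j := r - ρ - w with hj
  have hjrd : j ≤ rd := by omega
  have hjt : j ≤ t := by omega
  set m' := min j qd with hm'
  set bQ := Module.finBasis K ↥Q
  set bR := Module.finBasis K ↥R
  set vR : Fin rd → W' := fun i => ((bR i : ↥R) : W') with hvR
  have hvRR : ∀ i, vR i ∈ R := fun i => (bR i).2
  have hvRU : ∀ i, vR i ∈ U := fun i => hRU (hvRR i)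
  set τ' : ↥Q →ₗ[K] W' := bQ.constr K (fun i : Fin qd =>
    if h : (i : ℕ) < m' then vR ⟨i, lt_of_lt_of_le (lt_of_lt_of_le h (min_le_left _ _)) hjrd⟩
      else 0) with hτ'
  have hτR : LinearMap.range τ' ≤ R := by
    rw [hτ', Basis.constr_range]
    refine span_le.2 ?_
    rintro x ⟨i, rfl⟩
    by_cases h : (i : ℕ) < m'
    · simp only [h, dif_pos]; exact hvRR _
    · simp only [h, dif_neg, not_false_iff]; exact R.zero_mem
  set ν : V' →ₗ[K] ↥Q := LinearMap.codRestrict Q ((LinearMap.id - e) ∘ₗ g)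
    (fun x => Submodule.mem_map.2 ⟨g x, ⟨x, rfl⟩, by simp⟩) with hν
  set μ : V' →ₗ[K] W' := e ∘ₗ g + τ' ∘ₗ ν with hμ
  have hPU : P ≤ U := inf_le_left
  have hμU : ∀ x, μ x ∈ U := by
    intro x
    exact Submodule.add_mem _ (hPU (herange (g x))) (hRU (hτR ⟨ν x, rfl⟩))
  -- section of f
  obtain ⟨σ, hσ⟩ := f.rangeRestrict.exists_rightInverse_of_surjective
    (LinearMap.range_eq_top.2 f.surjective_rangeRestrict)
  have hfσ : ∀ u : ↥U, f (σ u) = (u : W') := by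
    intro u
    have := congrArg (fun h : ↥U →ₗ[K] ↥U => ((h u : ↥U) : W')) hσ
    simpa using this
  set a : V' →ₗ[K] V := σ ∘ₗ LinearMap.codRestrict U μ hμU with ha
  have hfa : ∀ x, f (a x) = μ x := by
    intro x
    rw [ha]
    simp only [LinearMap.comp_apply]
    rw [hfσ]
    rfl
  have hfacomp : f ∘ₗ a = μ := by ext x; exact hfa x
  -- the boost subspace
  set u2 : Fin (j - m') → V := fun i => σ ⟨vR ⟨m' + i, by omega⟩, hvRU _⟩ with hu2
  set S : Submodule K V := ker f ⊔ span K (Set.range u2) with hS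
  obtain ⟨κ, hκS, hκrank⟩ := RANKBOOST a S
  refine ⟨a + κ, ?_, ?_⟩
  · -- rank bound
    have hinf : (LinearMap.range a ⊔ S) ⊓ ker f = ker f :=
      inf_eq_right.2 ((le_sup_left : ker f ≤ S).trans le_sup_right)
    have hFRKa := FRK f (LinearMap.range a ⊔ S)
    rw [hinf] at hFRKa
    have hrnf := f.finrank_range_add_finrank_ker
    rw [← hU, ← hr, ← hn] at hrnf
    set vj : Fin j → W' := fun i => vR ⟨(i : ℕ), lt_of_lt_of_le i.2 hjrd⟩ with hvj
    set MF := Submodule.map f (LinearMap.range a ⊔ S) with hMF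
    have hc1 : P ≤ LinearMap.range μ := by
      intro p hp
      obtain ⟨x, hx⟩ := (inf_le_right : P ≤ T) hp
      refine ⟨x, ?_⟩
      have hν0 : ν x = 0 := by
        apply Subtype.ext
        simp [hν, hx, heP p hp]
      simp [hμ, hν0, hx, heP p hp]
    have hμMF : LinearMap.range μ ≤ MF := by
      rw [hMF, Submodule.map_sup, ← hfacomp, LinearMap.range_comp]
      exact le_sup_left
    have hu2S : ∀ i2 : Fin (j - m'), u2 i2 ∈ S :=
      fun i2 => Submodule.mem_sup_right (subset_span ⟨i2, rfl⟩)
    have hvjMF : ∀ i : Fin j, vj i ∈ MF := by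
      intro i
      by_cases hi : (i : ℕ) < m'
      · -- comes from range μ
        have hiq : (i : ℕ) < qd := lt_of_lt_of_le hi (min_le_right _ _)
        set q := bQ ⟨(i : ℕ), hiq⟩ with hq
        obtain ⟨tt, htt, htq⟩ := Submodule.mem_map.1 q.2
        obtain ⟨x, rfl⟩ := htt
        have hνq : ν x = q := by
          apply Subtype.ext
          simpa [hν] using htq
        have hμx : μ x = e (g x) + vj i := by
          rw [hμ]
          simp only [LinearMap.add_apply, LinearMap.comp_apply, hνq, hq, hτ',
            Basis.constr_basis]
          simp only [hi, dif_pos]; rfl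
        have hvjx : vj i = μ x - e (g x) := by rw [hμx]; abel
        rw [hvjx]
        exact hμMF (sub_mem ⟨x, rfl⟩ (hc1 (herange (g x))))
      · -- comes from S
        have him : (i : ℕ) - m' < j - m' := by omega
        have hfu2 : f (u2 ⟨(i : ℕ) - m', him⟩) = vj i := by
          rw [hu2, hfσ]
          have : (⟨m' + ((i : ℕ) - m'), by omega⟩ : Fin rd)
              = ⟨(i : ℕ), lt_of_lt_of_le i.2 hjrd⟩ := by
            apply Fin.ext; simp; omega
          rw [this]
        rw [← hfu2]
        exact ⟨u2 ⟨(i : ℕ) - m', him⟩, Submodule.mem_sup_right (hu2S _), rfl⟩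
    have hvjind : LinearIndependent K vj := by
      have h1 : LinearIndependent K vR := by
        rw [hvR]
        exact (bR.linearIndependent.map' R.subtype (Submodule.ker_subtype _))
      exact h1.comp _ (fun i1 i2 h => by
        apply Fin.ext
        simpa using congrArg (fun x : Fin rd => (x : ℕ)) h)
    have hfrvj : finrank K ↥(span K (Set.range vj)) = j :=
      (finrank_span_eq_card hvjind).trans (Fintype.card_fin j)
    have hspanR : span K (Set.range vj) ≤ R := by
      rw [span_le]; rintro x ⟨i, rfl⟩; exact hvRR _
    have hdisj : P ⊓ span K (Set.range vj) = ⊥ := by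
      rw [← le_bot_iff, ← hPRb]
      exact inf_le_inf_left _ hspanR
    have hbig : P ⊔ span K (Set.range vj) ≤ MF := by
      refine sup_le (hc1.trans hμMF) ?_
      rw [span_le]; rintro x ⟨i, rfl⟩; exact hvjMF i
    have hfrbig : finrank K ↥(P ⊔ span K (Set.range vj)) = w + j := by
      have h := Submodule.finrank_sup_add_finrank_inf_eq P (span K (Set.range vj))
      rw [hdisj] at h
      simp only [finrank_bot, add_zero] at h
      rw [← hw] at h
      omega
    have hmono := Submodule.finrank_mono hbig
    rw [hfrbig] at hmono
    omega
  · -- error bound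
    have hsplit : g - f ∘ₗ (a + κ) = (g - μ) - f ∘ₗ κ := by
      ext x
      simp only [LinearMap.sub_apply, LinearMap.comp_apply, LinearMap.add_apply,
        map_add, hfa x]
      abel
    rw [hsplit]
    have hle1 := RANGESUB (g - μ) (f ∘ₗ κ)
    have hgmu : g - μ = (Q.subtype - τ') ∘ₗ ν := by
      ext x
      simp only [LinearMap.sub_apply, LinearMap.comp_apply, LinearMap.add_apply, hμ]
      have : (Q.subtype (ν x) : W') = g x - e (g x) := by simp [hν]
      rw [this]
      abel
    have hfr1 : finrank K ↥(LinearMap.range (g - μ)) ≤ qd := by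
      rw [hgmu]
      calc finrank K ↥(LinearMap.range ((Q.subtype - τ') ∘ₗ ν))
          ≤ finrank K ↥(LinearMap.range (Q.subtype - τ')) :=
            Submodule.finrank_mono (LinearMap.range_comp_le_range _ _)
        _ ≤ finrank K ↥Q := LinearMap.finrank_range_le _
    have hfr2 : finrank K ↥(LinearMap.range (f ∘ₗ κ)) ≤ j - m' := by
      have h1 : LinearMap.range (f ∘ₗ κ) ≤ span K (Set.range (f ∘ u2)) := by
        rw [LinearMap.range_comp]
        refine le_trans (Submodule.map_mono hκS) ?_
        rw [hS, Submodule.map_sup, Submodule.map_span, ← Set.range_comp]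
        refine sup_le ?_ le_rfl
        rintro x ⟨z, hz, rfl⟩
        simp only [SetLike.mem_coe] at hz ⊢
        rw [LinearMap.mem_ker.1 hz]
        exact Submodule.zero_mem _
      calc finrank K ↥(LinearMap.range (f ∘ₗ κ))
          ≤ finrank K ↥(span K (Set.range (f ∘ u2))) := Submodule.finrank_mono h1
        _ ≤ j - m' := SPANRANGE _
    have hsup := Submodule.finrank_sup_add_finrank_inf_eq
      (LinearMap.range (g - μ)) (LinearMap.range (f ∘ₗ κ))
    have hfinal := Submodule.finrank_mono hle1
    omega

end ach



section more
variable {K : Type*} [Field K] {V V' W' : Type*} [AddCommGroup V] [Module K V]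
  [AddCommGroup V'] [Module K V'] [AddCommGroup W'] [Module K W']
  [FiniteDimensional K V] [FiniteDimensional K V'] [FiniteDimensional K W']

lemma LB (f : V →ₗ[K] W') (g : V' →ₗ[K] W') (β : V' →ₗ[K] V) (ρ : ℕ)
    (hβ : finrank K V - ρ ≤ finrank K ↥(LinearMap.range β)) :
    finrank K ↥(LinearMap.range g) ≤ finrank K ↥(LinearMap.range (g - f ∘ₗ β)) +
        finrank K ↥(LinearMap.range f ⊓ LinearMap.range g) ∧
      finrank K ↥(LinearMap.range f) ≤ finrank K ↥(LinearMap.range (g - f ∘ₗ β)) +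
        finrank K ↥(LinearMap.range f ⊓ LinearMap.range g) + ρ := by
  have hTDU : LinearMap.range g ≤ LinearMap.range (g - f ∘ₗ β) ⊔ LinearMap.range f := by
    rintro yy ⟨x, rfl⟩
    have hgx : g x = (g - f ∘ₗ β) x + f (β x) := by simp
    rw [hgx]
    exact Submodule.add_mem _ (Submodule.mem_sup_left ⟨x, rfl⟩)
      (Submodule.mem_sup_right ⟨β x, rfl⟩)
  constructor
  · have h1 := Submodule.finrank_sup_add_finrank_inf_eq (LinearMap.range g) (LinearMap.range f)
    have h2 : finrank K ↥(LinearMap.range g ⊔ LinearMap.range f) ≤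
        finrank K ↥(LinearMap.range (g - f ∘ₗ β) ⊔ LinearMap.range f) :=
      Submodule.finrank_mono (sup_le hTDU le_sup_right)
    have h3 := Submodule.finrank_sup_add_finrank_inf_eq
      (LinearMap.range (g - f ∘ₗ β)) (LinearMap.range f)
    have h4 : LinearMap.range g ⊓ LinearMap.range f = LinearMap.range f ⊓ LinearMap.range g :=
      inf_comm _ _
    rw [h4] at h1
    omega
  · have hSm := FRK f (LinearMap.range β)
    have hik : finrank K ↥(LinearMap.range β ⊓ ker f) ≤ finrank K ↥(ker f) :=
      Submodule.finrank_mono inf_le_right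
    have hrn := f.finrank_range_add_finrank_ker
    have hβn : finrank K ↥(LinearMap.range β) ≤ finrank K V := Submodule.finrank_le _
    have hSmDT : Submodule.map f (LinearMap.range β) ≤
        LinearMap.range f ⊓ (LinearMap.range (g - f ∘ₗ β) ⊔ LinearMap.range g) := by
      rintro yy hy
      obtain ⟨z, ⟨x, rfl⟩, rfl⟩ := hy
      refine ⟨⟨β x, rfl⟩, ?_⟩
      have : f (β x) = g x + (-((g - f ∘ₗ β) x)) := by simp
      rw [this]
      exact Submodule.add_mem _ (Submodule.mem_sup_right ⟨x, rfl⟩)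
        (Submodule.mem_sup_left (neg_mem ⟨x, rfl⟩))
    have hINT := INT (LinearMap.range f) (LinearMap.range (g - f ∘ₗ β)) (LinearMap.range g)
    have hfm := Submodule.finrank_mono hSmDT
    omega

lemma WCONS (U V : Submodule K W') (t ρ : ℕ)
    (h : max (finrank K U) (finrank K V) ≤ finrank K ↥(U ⊓ V) + 2 * t + ρ) :
    ∃ W : Submodule K W', finrank K W ≤ max (finrank K U) (finrank K V) ∧
      finrank K U ≤ finrank K ↥(U ⊓ W) + t + ρ ∧ finrank K W ≤ finrank K ↥(U ⊓ W) + t ∧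
      finrank K V ≤ finrank K ↥(V ⊓ W) + t + ρ ∧ finrank K W ≤ finrank K ↥(V ⊓ W) + t := by
  classical
  have hwu : finrank K ↥(U ⊓ V) ≤ finrank K U := Submodule.finrank_mono inf_le_left
  have hwv : finrank K ↥(U ⊓ V) ≤ finrank K V := Submodule.finrank_mono inf_le_right
  obtain ⟨RU, hRUle, hRUb, hRUt⟩ := COMPL (inf_le_left : U ⊓ V ≤ U)
  obtain ⟨RV, hRVle, hRVb, hRVt⟩ := COMPL (inf_le_right : U ⊓ V ≤ V)
  have hru : finrank K ↥(U ⊓ V) + finrank K ↥RU = finrank K U := by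
    have h1 := Submodule.finrank_sup_add_finrank_inf_eq (U ⊓ V) RU
    rw [hRUt, hRUb] at h1
    simp only [finrank_bot, add_zero] at h1
    omega
  have hrv : finrank K ↥(U ⊓ V) + finrank K ↥RV = finrank K V := by
    have h1 := Submodule.finrank_sup_add_finrank_inf_eq (U ⊓ V) RV
    rw [hRVt, hRVb] at h1
    simp only [finrank_bot, add_zero] at h1
    omega
  set w := finrank K ↥(U ⊓ V) with hwdef
  set a := finrank K U - w - (t + ρ) with hadef
  set b := finrank K V - w - (t + ρ) with hbdef
  have haRU : a ≤ finrank K ↥RU := by omega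
  have hbRV : b ≤ finrank K ↥RV := by omega
  set bU := Module.finBasis K ↥RU
  set bV := Module.finBasis K ↥RV
  set famU : Fin a → W' := fun i => ((bU ⟨(i : ℕ), lt_of_lt_of_le i.2 haRU⟩ : ↥RU) : W')
    with hfamU
  set famV : Fin b → W' := fun i => ((bV ⟨(i : ℕ), lt_of_lt_of_le i.2 hbRV⟩ : ↥RV) : W')
    with hfamV
  set U₁ := span K (Set.range famU) with hU₁def
  set V₁ := span K (Set.range famV) with hV₁def
  have hU₁RU : U₁ ≤ RU := by
    rw [hU₁def, span_le]; rintro x ⟨i, rfl⟩; exact (bU _).2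
  have hV₁RV : V₁ ≤ RV := by
    rw [hV₁def, span_le]; rintro x ⟨i, rfl⟩; exact (bV _).2
  have hfrU₁ : finrank K ↥U₁ = a := by
    have hind : LinearIndependent K famU := by
      have h1 : LinearIndependent K (fun i : Fin (finrank K ↥RU) => ((bU i : ↥RU) : W')) :=
        bU.linearIndependent.map' RU.subtype (Submodule.ker_subtype _)
      exact h1.comp _ (fun i1 i2 hh => by
        apply Fin.ext
        simpa using congrArg (fun x : Fin (finrank K ↥RU) => (x : ℕ)) hh)
    exact (finrank_span_eq_card hind).trans (Fintype.card_fin a)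
  have hfrV₁ : finrank K ↥V₁ = b := by
    have hind : LinearIndependent K famV := by
      have h1 : LinearIndependent K (fun i : Fin (finrank K ↥RV) => ((bV i : ↥RV) : W')) :=
        bV.linearIndependent.map' RV.subtype (Submodule.ker_subtype _)
      exact h1.comp _ (fun i1 i2 hh => by
        apply Fin.ext
        simpa using congrArg (fun x : Fin (finrank K ↥RV) => (x : ℕ)) hh)
    exact (finrank_span_eq_card hind).trans (Fintype.card_fin b)
  refine ⟨((U ⊓ V) ⊔ U₁) ⊔ V₁, ?_, ?_, ?_, ?_, ?_⟩ <;>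
  · -- common finrank facts
    have hPU₁ : finrank K ↥((U ⊓ V) ⊔ U₁) = w + a := by
      have hdisj : (U ⊓ V) ⊓ U₁ = ⊥ := by
        rw [← le_bot_iff, ← hRUb]
        exact inf_le_inf_left _ hU₁RU
      have h1 := Submodule.finrank_sup_add_finrank_inf_eq (U ⊓ V) U₁
      rw [hdisj] at h1
      simp only [finrank_bot, add_zero] at h1
      omega
    have hPV₁ : finrank K ↥((U ⊓ V) ⊔ V₁) = w + b := by
      have hdisj : (U ⊓ V) ⊓ V₁ = ⊥ := by
        rw [← le_bot_iff, ← hRVb]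
        exact inf_le_inf_left _ hV₁RV
      have h1 := Submodule.finrank_sup_add_finrank_inf_eq (U ⊓ V) V₁
      rw [hdisj] at h1
      simp only [finrank_bot, add_zero] at h1
      omega
    have hWub : finrank K ↥(((U ⊓ V) ⊔ U₁) ⊔ V₁) ≤ w + a + b := by
      have h1 := Submodule.finrank_sup_add_finrank_inf_eq ((U ⊓ V) ⊔ U₁) V₁
      omega
    have hUW : w + a ≤ finrank K ↥(U ⊓ (((U ⊓ V) ⊔ U₁) ⊔ V₁)) := by
      have hle : (U ⊓ V) ⊔ U₁ ≤ U ⊓ (((U ⊓ V) ⊔ U₁) ⊔ V₁) :=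
        le_inf (sup_le inf_le_left (hU₁RU.trans hRUle)) le_sup_left
      have := Submodule.finrank_mono hle
      omega
    have hVW : w + b ≤ finrank K ↥(V ⊓ (((U ⊓ V) ⊔ U₁) ⊔ V₁)) := by
      have hle : (U ⊓ V) ⊔ V₁ ≤ V ⊓ (((U ⊓ V) ⊔ U₁) ⊔ V₁) :=
        le_inf (sup_le inf_le_right (hV₁RV.trans hRVle))
          (sup_le (le_sup_left.trans le_sup_left) le_sup_right)
      have := Submodule.finrank_mono hle
      omega
    have hUWub : finrank K ↥(U ⊓ (((U ⊓ V) ⊔ U₁) ⊔ V₁)) ≤ finrank K U :=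
      Submodule.finrank_mono inf_le_left
    have hVWub : finrank K ↥(V ⊓ (((U ⊓ V) ⊔ U₁) ⊔ V₁)) ≤ finrank K V :=
      Submodule.finrank_mono inf_le_left
    omega

end more

section bridges
variable {K : Type*} [Field K]

lemma rowSpace_eq_range {a b : ℕ} (M : Matrix (Fin a) (Fin b) K) :
    rowSpace M = LinearMap.range M.vecMulLinear := by
  rw [rowSpace, _root_.range_vecMulLinear]; rfl

lemma rank_eq_rowSpace {a b : ℕ} (M : Matrix (Fin a) (Fin b) K) :
    M.rank = finrank K (rowSpace M) := by
  rw [Matrix.rank_eq_finrank_span_row]; rfl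

lemma rank_eq_range_vecMul {a b : ℕ} (M : Matrix (Fin a) (Fin b) K) :
    M.rank = finrank K ↥(LinearMap.range M.vecMulLinear) := by
  rw [rank_eq_rowSpace, rowSpace_eq_range]

lemma vecMulLinear_sub_mul {n m N : ℕ} (Y : Matrix (Fin N) (Fin m) K)
    (A : Matrix (Fin N) (Fin n) K) (X : Matrix (Fin n) (Fin m) K) :
    (Y - A * X).vecMulLinear = Y.vecMulLinear - X.vecMulLinear ∘ₗ A.vecMulLinear := by
  apply LinearMap.ext
  intro v
  simp only [Matrix.vecMulLinear_apply, LinearMap.sub_apply, LinearMap.comp_apply,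
    Matrix.vecMul_sub, Matrix.vecMul_vecMul]

lemma vecMulLinear_toMatrix' {p q : ℕ} (β : (Fin p → K) →ₗ[K] (Fin q → K)) :
    ((LinearMap.toMatrix' β)ᵀ).vecMulLinear = β := by
  rw [Matrix.vecMulLinear_transpose, ← Matrix.toLin'_apply', Matrix.toLin'_toMatrix']

lemma YOFW {N m : ℕ} (W : Submodule K (Fin m → K)) (h : finrank K W ≤ N) :
    ∃ Y : Matrix (Fin N) (Fin m) K, rowSpace Y = W := by
  classical
  set bW := Module.finBasis K ↥W
  set r : Fin N → (Fin m → K) := fun i =>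
    if h' : (i : ℕ) < finrank K ↥W then ((bW ⟨(i : ℕ), h'⟩ : ↥W) : Fin m → K) else 0 with hr
  refine ⟨Matrix.of r, ?_⟩
  have hrow : rowSpace (Matrix.of r) = span K (Set.range r) := rfl
  rw [hrow]
  apply le_antisymm
  · rw [span_le]
    rintro x ⟨i, rfl⟩
    rw [hr]
    by_cases h' : (i : ℕ) < finrank K ↥W
    · simp only [h', dif_pos]; exact (bW _).2
    · simp only [h', dif_neg, not_false_iff]; exact W.zero_mem
  · have hWspan : W = span K (Set.range (fun k => ((bW k : ↥W) : Fin m → K))) := by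
      have h1 : Submodule.map W.subtype (span K (Set.range bW)) = W := by
        rw [bW.span_eq, Submodule.map_top, range_subtype]
      conv_lhs => rw [← h1]
      rw [Submodule.map_span, ← Set.range_comp]
      rfl
    rw [hWspan]
    apply span_mono
    rintro x ⟨k, rfl⟩
    refine ⟨⟨(k : ℕ), lt_of_lt_of_le k.2 h⟩, ?_⟩
    rw [hr]
    simp only [k.2, dif_pos]

lemma EXA {n N : ℕ} (hnN : n ≤ N) (ρ : ℕ) :
    ∃ A : Matrix (Fin N) (Fin n) K, n - ρ ≤ A.rank := by
  classical
  set β0 : (Fin N → K) →ₗ[K] (Fin n → K) := LinearMap.funLeft K K (Fin.castLE hnN)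
  refine ⟨(LinearMap.toMatrix' β0)ᵀ, ?_⟩
  rw [rank_eq_range_vecMul, vecMulLinear_toMatrix']
  have hsurj : Function.Surjective β0 :=
    LinearMap.funLeft_surjective_of_injective K K _ (Fin.castLE_injective hnN)
  rw [LinearMap.range_eq_top.2 hsurj]
  simp [Module.finrank_fin_fun]

end bridges

/-- A code with at least two codewords, no two distinct codewords of which
have the same row space, corrects `t` packet errors under rank deficiency `ρ`
(is `t`-discrepancy-correcting for `Δ_ρ`) if and only if
`d_I(⟨𝒞⟩) > 2t + ρ`. -/
theorem correcting_iff_injDistCode {K : Type*} [Field K] [Fintype K] {n m N : ℕ}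
    (hn : 0 < n) (hm : 0 < m) (hN : 0 < N) (hnN : n ≤ N) (ρ : ℕ)
    (C : Set (Matrix (Fin n) (Fin m) K)) (hC : ∃ X ∈ C, ∃ X' ∈ C, X ≠ X')
    (hinj : ∀ X ∈ C, ∀ X' ∈ C, rowSpace X = rowSpace X' → X = X')
    (t : ℕ) :
    Correcting (fun X (Y : Matrix (Fin N) (Fin m) K) => discRho ρ X Y) C t ↔
      2 * t + ρ < injDistCode C := by
  classical
  have hfinN : finrank K (Fin N → K) = N := Module.finrank_fin_fun K
  have hfinn : finrank K (Fin n → K) = n := Module.finrank_fin_fun K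
  constructor
  · intro hCor
    by_contra hlt
    push_neg at hlt
    have hne_set : {e : ℕ | ∃ X ∈ C, ∃ X' ∈ C, X ≠ X' ∧
        e = injDist (rowSpace X) (rowSpace X')}.Nonempty := by
      obtain ⟨X0, hX0, X0', hX0', hne0⟩ := hC
      exact ⟨injDist (rowSpace X0) (rowSpace X0'), X0, hX0, X0', hX0', hne0, rfl⟩
    obtain ⟨X, hX, X', hX', hne, heq⟩ := Nat.sInf_mem hne_set
    have hUVd : injDist (rowSpace X) (rowSpace X') ≤ 2 * t + ρ := by
      rw [← heq]; exact hlt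
    have hwu : finrank K ↥(rowSpace X ⊓ rowSpace X') ≤ finrank K (rowSpace X) :=
      Submodule.finrank_mono inf_le_left
    have hwv : finrank K ↥(rowSpace X ⊓ rowSpace X') ≤ finrank K (rowSpace X') :=
      Submodule.finrank_mono inf_le_right
    have hmax : max (finrank K (rowSpace X)) (finrank K (rowSpace X')) ≤
        finrank K ↥(rowSpace X ⊓ rowSpace X') + 2 * t + ρ := by
      simp only [injDist] at hUVd
      omega
    obtain ⟨W, hWle, hU1, hU2, hV1, hV2⟩ := WCONS (rowSpace X) (rowSpace X') t ρ hmax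
    have hWN : finrank K ↥W ≤ N := by
      have h1 : finrank K (rowSpace X) ≤ n := by
        rw [rowSpace_eq_range]
        have h2 := (X.vecMulLinear).finrank_range_le
        rw [hfinn] at h2; exact h2
      have h2 : finrank K (rowSpace X') ≤ n := by
        rw [rowSpace_eq_range]
        have h2 := (X'.vecMulLinear).finrank_range_le
        rw [hfinn] at h2; exact h2
      omega
    obtain ⟨Y, hY⟩ := YOFW W hWN
    have key : ∀ Z : Matrix (Fin n) (Fin m) K,
        finrank K (rowSpace Z) ≤ finrank K ↥(rowSpace Z ⊓ W) + t + ρ →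
        finrank K ↥W ≤ finrank K ↥(rowSpace Z ⊓ W) + t →
        discRho ρ Z Y ≤ t := by
      intro Z hz1 hz2
      obtain ⟨β, hβ1, hβ2⟩ := ACH (Z.vecMulLinear) (Y.vecMulLinear) t ρ
        (by rw [hfinn, hfinN]; exact hnN)
        (by rw [← rowSpace_eq_range Z, ← rowSpace_eq_range Y, hY]; exact hz1)
        (by rw [← rowSpace_eq_range Z, ← rowSpace_eq_range Y, hY]; exact hz2)
      have hArank : n - ρ ≤ ((LinearMap.toMatrix' β)ᵀ).rank := by
        rw [rank_eq_range_vecMul, vecMulLinear_toMatrix']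
        rw [hfinn] at hβ1; exact hβ1
      have hAt : (Y - (LinearMap.toMatrix' β)ᵀ * Z).rank ≤ t := by
        rw [rank_eq_range_vecMul, vecMulLinear_sub_mul, vecMulLinear_toMatrix']
        exact hβ2
      calc discRho ρ Z Y ≤ (Y - (LinearMap.toMatrix' β)ᵀ * Z).rank :=
            Nat.sInf_le ⟨(LinearMap.toMatrix' β)ᵀ, hArank, rfl⟩
        _ ≤ t := hAt
    exact hCor X hX X' hX' hne Y ⟨key X hU1 hU2, key X' hV1 hV2⟩
  · intro hd X hX X' hX' hne Y hcon
    obtain ⟨ht1, ht2⟩ := hcon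
    have hex : ∀ Z : Matrix (Fin n) (Fin m) K, discRho ρ Z Y ≤ t →
        ∃ A : Matrix (Fin N) (Fin n) K, n - ρ ≤ A.rank ∧ (Y - A * Z).rank ≤ t := by
      intro Z hZ
      have hne' : {r : ℕ | ∃ A : Matrix (Fin N) (Fin n) K,
          n - ρ ≤ A.rank ∧ r = (Y - A * Z).rank}.Nonempty := by
        obtain ⟨A0, hA0⟩ := EXA (K := K) hnN ρ
        exact ⟨(Y - A0 * Z).rank, A0, hA0, rfl⟩
      obtain ⟨A, hA, hr⟩ := Nat.sInf_mem hne'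
      refine ⟨A, hA, ?_⟩
      rw [← hr]
      exact hZ
    obtain ⟨A, hA, hAt⟩ := hex X ht1
    obtain ⟨A', hA', hAt'⟩ := hex X' ht2
    have hβX : finrank K (Fin n → K) - ρ ≤ finrank K ↥(LinearMap.range A.vecMulLinear) := by
      rw [hfinn, ← rank_eq_range_vecMul]; exact hA
    have hβX' : finrank K (Fin n → K) - ρ ≤ finrank K ↥(LinearMap.range A'.vecMulLinear) := by
      rw [hfinn, ← rank_eq_range_vecMul]; exact hA'
    obtain ⟨hg1, hf1⟩ := LB X.vecMulLinear Y.vecMulLinear A.vecMulLinear ρ hβX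
    obtain ⟨hg2, hf2⟩ := LB X'.vecMulLinear Y.vecMulLinear A'.vecMulLinear ρ hβX'
    have hD1 : finrank K
        ↥(LinearMap.range (Y.vecMulLinear - X.vecMulLinear ∘ₗ A.vecMulLinear)) ≤ t := by
      rw [← vecMulLinear_sub_mul, ← rank_eq_range_vecMul]; exact hAt
    have hD2 : finrank K
        ↥(LinearMap.range (Y.vecMulLinear - X'.vecMulLinear ∘ₗ A'.vecMulLinear)) ≤ t := by
      rw [← vecMulLinear_sub_mul, ← rank_eq_range_vecMul]; exact hAt'
    have hmix := Submodule.finrank_sup_add_finrank_inf_eq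
      (LinearMap.range X.vecMulLinear ⊓ LinearMap.range Y.vecMulLinear)
      (LinearMap.range X'.vecMulLinear ⊓ LinearMap.range Y.vecMulLinear)
    have hmix1 : finrank K ↥((LinearMap.range X.vecMulLinear ⊓ LinearMap.range Y.vecMulLinear)
        ⊔ (LinearMap.range X'.vecMulLinear ⊓ LinearMap.range Y.vecMulLinear)) ≤
        finrank K ↥(LinearMap.range Y.vecMulLinear) :=
      Submodule.finrank_mono (sup_le inf_le_right inf_le_right)
    have hmix2 : finrank K ↥((LinearMap.range X.vecMulLinear ⊓ LinearMap.range Y.vecMulLinear)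
        ⊓ (LinearMap.range X'.vecMulLinear ⊓ LinearMap.range Y.vecMulLinear)) ≤
        finrank K ↥(LinearMap.range X.vecMulLinear ⊓ LinearMap.range X'.vecMulLinear) :=
      Submodule.finrank_mono (le_inf (inf_le_left.trans inf_le_left)
        (inf_le_right.trans inf_le_left))
    have hJ : injDistCode C ≤ injDist (rowSpace X) (rowSpace X') :=
      Nat.sInf_le ⟨X, hX, X', hX', hne, rfl⟩
    simp only [injDist] at hJ
    rw [rowSpace_eq_range X, rowSpace_eq_range X'] at hJ
    omega
end

section
/- Let ρ ∈ ℕ with N ≥ n − ρ. Then for all X ∈ 𝔽_q^{n×m} and Y ∈ 𝔽_q^{N×m}, 2·Δ_ρ(X,Y) = d_S(⟨X⟩, ⟨Y⟩) − ρ + |rank X − rank Y − ρ|, where d_S is the subspace distance. -/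
open Module Submodule LinearMap

set_option maxHeartbeats 1600000
set_option synthInstance.maxHeartbeats 400000

section Helpers

variable {K : Type*} [Field K] {n m N : ℕ}

/-- There is a linear map with prescribed range, as long as dimensions permit. -/
lemma exists_range_eq {V₁ V₂ : Type*} [AddCommGroup V₁] [Module K V₁]
    [AddCommGroup V₂] [Module K V₂] [FiniteDimensional K V₁] [FiniteDimensional K V₂]
    (Q : Submodule K V₂) (h : finrank K Q ≤ finrank K V₁) :
    ∃ ξ : V₁ →ₗ[K] V₂, LinearMap.range ξ = Q := by
  classical
  set b := finBasis K V₁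
  set bq := finBasis K ↥Q
  refine ⟨b.constr K (fun i => if h' : (i : ℕ) < finrank K ↥Q then (bq ⟨i, h'⟩ : V₂) else 0), ?_⟩
  rw [Basis.constr_range]
  apply le_antisymm
  · rw [Submodule.span_le]
    rintro v ⟨i, rfl⟩
    by_cases h' : (i : ℕ) < finrank K ↥Q
    · simpa [h'] using (bq ⟨i, h'⟩).2
    · simp [h']
  · have hQ : Q = Submodule.map Q.subtype (Submodule.span K (Set.range bq)) := by
      rw [Basis.span_eq, Submodule.map_top, Submodule.range_subtype]
    conv_lhs => rw [hQ]
    rw [Submodule.map_span]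
    apply Submodule.span_mono
    rintro v ⟨_, ⟨j, rfl⟩, rfl⟩
    exact ⟨⟨j.1, lt_of_lt_of_le j.2 h⟩, by simp [j.2]⟩

/-- There is a submodule of any prescribed dimension inside a given submodule. -/
lemma exists_le_finrank_eq {V : Type*} [AddCommGroup V] [Module K V] [FiniteDimensional K V]
    (P : Submodule K V) (e : ℕ) (h : e ≤ finrank K P) :
    ∃ Q : Submodule K V, Q ≤ P ∧ finrank K Q = e := by
  classical
  set bp := finBasis K ↥P
  set v : Fin e → V := fun j => (bp (Fin.castLE h j) : V)
  have li : LinearIndependent K v := by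
    have : LinearIndependent K fun (j : Fin (finrank K ↥P)) => (bp j : V) :=
      bp.linearIndependent.map' P.subtype P.ker_subtype
    exact this.comp (Fin.castLE h) (Fin.castLE_injective h)
  refine ⟨Submodule.span K (Set.range v), ?_, ?_⟩
  · rw [Submodule.span_le]
    rintro x ⟨j, rfl⟩
    exact (bp (Fin.castLE h j)).2
  · rw [finrank_span_eq_card li, Fintype.card_fin]

/-- A disjoint subspace can be completed to a complement. -/
lemma exists_isCompl_le {V : Type*} [AddCommGroup V] [Module K V]
    (C W : Submodule K V) (h : C ⊓ W = ⊥) :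
    ∃ D : Submodule K V, IsCompl C D ∧ W ≤ D := by
  obtain ⟨T, hT⟩ := Submodule.exists_isCompl (C ⊔ W)
  refine ⟨W ⊔ T, ⟨?_, ?_⟩, le_sup_left⟩
  · rw [disjoint_iff]
    apply eq_bot_iff.2
    rintro x ⟨hxC, hxWT⟩
    rcases Submodule.mem_sup.1 hxWT with ⟨w, hw, s, hs, rfl⟩
    have hsT : w + s - w ∈ (C ⊔ W) ⊓ T := by
      refine ⟨?_, by simpa using hs⟩
      exact Submodule.sub_mem _ (Submodule.mem_sup_left hxC) (Submodule.mem_sup_right hw)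
    rw [hT.inf_eq_bot] at hsT
    have hs0 : s = 0 := by simpa using hsT
    have : w + s ∈ C ⊓ W := ⟨hxC, by simpa [hs0] using hw⟩
    rw [h] at this
    simpa using this
  · have htop : C ⊔ W ⊔ T = ⊤ := hT.sup_eq_top
    rw [codisjoint_iff, ← htop, sup_assoc]

/-- A section of a linear map over its range. -/
lemma exists_section {V₁ V₂ : Type*} [AddCommGroup V₁] [Module K V₁]
    [AddCommGroup V₂] [Module K V₂] (f : V₁ →ₗ[K] V₂) :
    ∃ σ : ↥(LinearMap.range f) →ₗ[K] V₁, ∀ u, f (σ u) = (u : V₂) := by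
  obtain ⟨σ, hσ⟩ := f.rangeRestrict.exists_rightInverse_of_surjective
    (LinearMap.range_rangeRestrict f ▸ rfl)
  refine ⟨σ, fun u => ?_⟩
  have := congrArg Subtype.val (LinearMap.congr_fun hσ u)
  simpa using this

lemma lower_bound (f : (Fin n → K) →ₗ[K] (Fin m → K)) (g : (Fin N → K) →ₗ[K] (Fin m → K))
    (α : (Fin N → K) →ₗ[K] (Fin n → K)) :
    finrank K ↥(range g) ≤ finrank K ↥(range (g - f ∘ₗ α)) + finrank K ↥(range f ⊓ range g) ∧
    finrank K ↥(range α) + finrank K ↥(range f) ≤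
      finrank K ↥(range (g - f ∘ₗ α)) + finrank K ↥(range f ⊓ range g) + n := by
  set U := range f with hU
  set V := range g with hV
  set Z := range (g - f ∘ₗ α) with hZ
  set P := range (f ∘ₗ α) with hP
  have hVZU : V ≤ Z ⊔ U := by
    rintro _ ⟨w, rfl⟩
    refine Submodule.mem_sup.2 ⟨(g - f ∘ₗ α) w, ⟨w, rfl⟩, f (α w), ⟨α w, rfl⟩, ?_⟩
    simp
  have hPZV : P ≤ Z ⊔ V := by
    rintro _ ⟨w, rfl⟩
    refine Submodule.mem_sup.2 ⟨-((g - f ∘ₗ α) w), neg_mem ⟨w, rfl⟩, g w, ⟨w, rfl⟩, ?_⟩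
    simp
  have hPU : P ≤ U := LinearMap.range_comp_le_range α f
  have e1 := Submodule.finrank_sup_add_finrank_inf_eq U V
  have e2 := Submodule.finrank_sup_add_finrank_inf_eq U Z
  have e3 := Submodule.finrank_sup_add_finrank_inf_eq P V
  have e4 := Submodule.finrank_sup_add_finrank_inf_eq Z V
  have mono1 : finrank K ↥(U ⊔ V) ≤ finrank K ↥(U ⊔ Z) :=
    Submodule.finrank_mono (sup_le le_sup_left (hVZU.trans (sup_le le_sup_right le_sup_left)))
  have mono2 : finrank K ↥(P ⊔ V) ≤ finrank K ↥(Z ⊔ V) :=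
    Submodule.finrank_mono (sup_le hPZV le_sup_right)
  have mono3 : finrank K ↥(P ⊓ V) ≤ finrank K ↥(U ⊓ V) :=
    Submodule.finrank_mono (inf_le_inf_right _ hPU)
  have rn_f : finrank K ↥U + finrank K ↥(ker f) = n := by
    have := LinearMap.finrank_range_add_finrank_ker f
    rwa [Module.finrank_fin_fun] at this
  have hra : finrank K ↥(range α) ≤ finrank K ↥P + finrank K ↥(ker f) := by
    have hrr : range (f.domRestrict (range α)) = P := by
      rw [LinearMap.range_domRestrict, hP, LinearMap.range_comp]
    have rn := LinearMap.finrank_range_add_finrank_ker (f.domRestrict (range α))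
    rw [hrr] at rn
    have hemb : finrank K ↥(ker (f.domRestrict (range α))) ≤ finrank K ↥(ker f) := by
      have hj : ∀ c : ↥(ker (f.domRestrict (range α))),
          ((range α).subtype ∘ₗ (ker (f.domRestrict (range α))).subtype) c ∈ ker f := by
        rintro ⟨⟨c, hc⟩, hc2⟩
        simpa [LinearMap.mem_ker] using hc2
      refine LinearMap.finrank_le_finrank_of_injective
        (f := LinearMap.codRestrict (ker f) _ hj) ?_
      intro a b hab
      have := congrArg Subtype.val hab
      simp only [LinearMap.codRestrict_apply, LinearMap.comp_apply] at this
      exact Subtype.ext (Subtype.ext (by simpa using this))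
    omega
  constructor
  · omega
  · omega

lemma exists_good (ρ : ℕ) (hNρ : n - ρ ≤ N)
    (f : (Fin n → K) →ₗ[K] (Fin m → K)) (g : (Fin N → K) →ₗ[K] (Fin m → K)) :
    ∃ α : (Fin N → K) →ₗ[K] (Fin n → K),
      n - ρ ≤ finrank K ↥(range α) ∧
      finrank K ↥(range (g - f ∘ₗ α)) ≤
        (finrank K ↥(range g) - finrank K ↥(range f ⊓ range g)) +
        (finrank K ↥(range f) - ρ - finrank K ↥(range g)) := by
  classical
  set U := range f with hU
  set V := range g with hV
  set W := U ⊓ V with hW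
  set x := finrank K ↥U with hx
  set y := finrank K ↥V with hy
  set t := finrank K ↥W with ht
  have hWU : W ≤ U := inf_le_left
  have hWV : W ≤ V := inf_le_right
  have htx : t ≤ x := Submodule.finrank_mono hWU
  have hty : t ≤ y := Submodule.finrank_mono hWV
  have hxn : x + finrank K ↥(ker f) = n := by
    have := LinearMap.finrank_range_add_finrank_ker f
    rwa [Module.finrank_fin_fun] at this
  have hyN : y + finrank K ↥(ker g) = N := by
    have := LinearMap.finrank_range_add_finrank_ker g
    rwa [Module.finrank_fin_fun] at this
  -- section of f
  obtain ⟨σ, hσ⟩ := exists_section (K := K) f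
  have hσinj : Function.Injective σ := by
    intro u u' h
    exact Subtype.ext (by rw [← hσ u, ← hσ u', h])
  -- complement of W in K^m, projection π, and C := ψ₀(V)
  obtain ⟨Cm, hCm⟩ := Submodule.exists_isCompl W
  set π := Submodule.linearProjOfIsCompl W Cm hCm with hπ
  set ψ₀ := (LinearMap.id : (Fin m → K) →ₗ[K] (Fin m → K)) - W.subtype ∘ₗ π with hψ₀
  have hψ₀W : ∀ w ∈ W, ψ₀ w = 0 := by
    intro w hw
    have : π w = ⟨w, hw⟩ := Submodule.linearProjOfIsCompl_apply_left hCm ⟨w, hw⟩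
    simp [hψ₀, this]
  have hπW : ∀ v : Fin m → K, ((π v : Fin m → K)) ∈ W := fun v => (π v).2
  set C := Submodule.map ψ₀ V with hC
  have hCdim : finrank K ↥C + t = y := by
    have hrr : range (ψ₀.domRestrict V) = C := by rw [LinearMap.range_domRestrict]
    have hker : ker (ψ₀.domRestrict V) = comap V.subtype W := by
      ext ⟨v, hv⟩
      simp only [LinearMap.mem_ker, LinearMap.domRestrict_apply, Submodule.mem_comap,
        Submodule.coe_subtype]
      constructor
      · intro h0
        have : v = ((π v : Fin m → K)) := by
          have := sub_eq_zero.1 (by simpa [hψ₀] using h0)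
          exact this
        rw [this]; exact hπW v
      · intro hvW
        exact hψ₀W v hvW
    have rn := LinearMap.finrank_range_add_finrank_ker (ψ₀.domRestrict V)
    rw [hrr, hker] at rn
    have : finrank K ↥(comap V.subtype W) = t :=
      (Submodule.comapSubtypeEquivOfLe hWV).finrank_eq
    rw [this] at rn
    exact rn
  have hCCm : C ≤ Cm := by
    rintro _ ⟨v, hv, rfl⟩
    have h1 : π ((π v : Fin m → K)) = π v :=
      Submodule.linearProjOfIsCompl_apply_left hCm (π v)
    have h0 : ψ₀ v ∈ ker π := by
      simp only [LinearMap.mem_ker, hψ₀, LinearMap.sub_apply, map_sub, LinearMap.id_apply,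
        LinearMap.comp_apply, Submodule.coe_subtype, h1, sub_self]
    exact (Submodule.projectionOnto_apply_eq_zero_iff hCm).1 h0
  have hCW : C ⊓ W = ⊥ := by
    rw [eq_bot_iff]
    rintro z ⟨hzC, hzW⟩
    exact (hCm.symm.inf_eq_bot ▸ Submodule.mem_inf.2 ⟨hCCm hzC, hzW⟩ : z ∈ (⊥ : Submodule K _))
  -- U₁: complement of W inside U, and U₂ ≤ U₁ of dimension e
  obtain ⟨D', hD'⟩ := Submodule.exists_isCompl (Submodule.comap U.subtype W)
  set U₁ := Submodule.map U.subtype D' with hU₁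
  have hU₁U : U₁ ≤ U := Submodule.map_subtype_le U D'
  have hU₁W : U₁ ⊓ W = ⊥ := by
    rw [eq_bot_iff]
    rintro z ⟨hz₁, hzW⟩
    rcases hz₁ with ⟨d, hd, rfl⟩
    have : d ∈ Submodule.comap U.subtype W ⊓ D' := ⟨hzW, hd⟩
    rw [hD'.inf_eq_bot, Submodule.mem_bot] at this
    simp [this]
  have hU₁dim : finrank K ↥U₁ + t = x := by
    have h1 : finrank K ↥U₁ = finrank K ↥D' := Submodule.finrank_map_subtype_eq U D'
    have h2 : finrank K ↥(Submodule.comap U.subtype W) + finrank K ↥D' = x :=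
      Submodule.finrank_add_eq_of_isCompl hD'
    have h3 : finrank K ↥(Submodule.comap U.subtype W) = t :=
      (Submodule.comapSubtypeEquivOfLe hWU).finrank_eq
    omega
  set e := x - ρ - y with he
  obtain ⟨U₂, hU₂U₁, hU₂dim⟩ := exists_le_finrank_eq (K := K) U₁ e (by omega)
  have hU₂U : U₂ ≤ U := hU₂U₁.trans hU₁U
  have hU₂W : U₂ ⊓ W = ⊥ := by
    rw [eq_bot_iff, ← hU₁W]
    exact inf_le_inf_right _ hU₂U₁
  -- the subspaces SW and SU₂ of K^n
  set SW := range (σ ∘ₗ Submodule.inclusion hWU) with hSW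
  set SU₂ := range (σ ∘ₗ Submodule.inclusion hU₂U) with hSU₂
  have hSWdim : finrank K ↥SW = t := by
    have hinj : Function.Injective ⇑(σ ∘ₗ Submodule.inclusion hWU) := by
      rw [LinearMap.coe_comp]; exact hσinj.comp (Submodule.inclusion_injective hWU)
    rw [hSW, LinearMap.finrank_range_of_inj hinj]
  have hSU₂dim : finrank K ↥SU₂ = e := by
    have hinj : Function.Injective ⇑(σ ∘ₗ Submodule.inclusion hU₂U) := by
      rw [LinearMap.coe_comp]; exact hσinj.comp (Submodule.inclusion_injective hU₂U)
    rw [hSU₂, LinearMap.finrank_range_of_inj hinj, ← hU₂dim]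
  have hfSW : ∀ w : ↥W, f (σ (Submodule.inclusion hWU w)) = (w : Fin m → K) :=
    fun w => hσ _
  have hfSU₂ : ∀ u : ↥U₂, f (σ (Submodule.inclusion hU₂U u)) = (u : Fin m → K) :=
    fun u => hσ _
  -- Q' := SU₂ ⊔ ker f
  set Q' := SU₂ ⊔ ker f with hQ'
  have hSU₂kerf : SU₂ ⊓ ker f = ⊥ := by
    rw [eq_bot_iff]
    rintro z ⟨⟨u, rfl⟩, hzk⟩
    have : ((Submodule.inclusion hU₂U u : ↥U) : Fin m → K) = 0 := by
      rw [← hσ (Submodule.inclusion hU₂U u)]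
      exact hzk
    have hu0 : u = 0 := Subtype.ext (by simpa using this)
    simp [hu0]
  have hQ'dim : finrank K ↥Q' = e + finrank K ↥(ker f) := by
    have h1 := Submodule.finrank_sup_add_finrank_inf_eq SU₂ (ker f)
    rw [hSU₂kerf] at h1
    simp only [finrank_bot] at h1
    rw [hQ']
    omega
  have hmapQ' : Submodule.map f Q' ≤ U₂ := by
    rw [hQ', Submodule.map_sup]
    apply sup_le
    · rintro _ ⟨_, ⟨u, rfl⟩, rfl⟩
      simp only [LinearMap.comp_apply]
      rw [hσ]
      exact Submodule.coe_inclusion hU₂U u ▸ u.2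
    · rintro _ ⟨z, hz, rfl⟩
      rw [LinearMap.mem_ker.1 hz]
      exact Submodule.zero_mem _
  -- Q'' inside Q' of dimension k₂, and ξ hitting it from ker g
  set kf := finrank K ↥(ker f) with hkf
  set kg := finrank K ↥(ker g) with hkg
  set k₂ := min kg (finrank K ↥Q') with hk₂
  obtain ⟨Q'', hQ''Q', hQ''dim⟩ := exists_le_finrank_eq (K := K) Q' k₂ (min_le_right _ _)
  obtain ⟨ξK, hξK⟩ := exists_range_eq (K := K) (V₁ := ↥(ker g)) Q''
    (by rw [hQ''dim]; exact min_le_left _ _)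
  obtain ⟨G', hG'⟩ := Submodule.exists_isCompl (ker g)
  set projg := Submodule.linearProjOfIsCompl (ker g) G' hG' with hprojg
  set ξ := ξK ∘ₗ projg with hξ
  -- SWQ := SW ⊔ Q'' and a complement Cn₃, inside which Q₃ of dim c₂
  set SWQ := SW ⊔ Q'' with hSWQ
  have hSWQ'' : SW ⊓ Q'' = ⊥ := by
    rw [eq_bot_iff]
    rintro z ⟨hzSW, hzQ''⟩
    rcases hzSW with ⟨w, rfl⟩
    rcases Submodule.mem_sup.1 (hQ''Q' hzQ'') with ⟨s, hs, k, hk, hzk⟩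
    rcases hs with ⟨u, rfl⟩
    have h2 := congrArg f hzk
    simp only [LinearMap.comp_apply, map_add, hσ, LinearMap.mem_ker.1 hk, add_zero,
      Submodule.coe_inclusion] at h2
    have hw0 : (w : Fin m → K) ∈ U₂ ⊓ W := ⟨h2 ▸ u.2, w.2⟩
    rw [hU₂W, Submodule.mem_bot] at hw0
    have hww : w = 0 := Subtype.ext hw0
    simp [hww]
  have hSWQdim : finrank K ↥SWQ = t + k₂ := by
    have h1 := Submodule.finrank_sup_add_finrank_inf_eq SW Q''
    rw [hSWQ''] at h1
    simp only [finrank_bot] at h1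
    rw [hSWQ]
    omega
  obtain ⟨Cn₃, hCn₃⟩ := Submodule.exists_isCompl SWQ
  have hCn₃dim : finrank K ↥SWQ + finrank K ↥Cn₃ = n := by
    have := Submodule.finrank_add_eq_of_isCompl hCn₃
    rwa [Module.finrank_fin_fun] at this
  set c₂ := min (finrank K ↥C) (finrank K ↥Cn₃) with hc₂
  obtain ⟨Q₃, hQ₃Cn₃, hQ₃dim⟩ := exists_le_finrank_eq (K := K) Cn₃ c₂ (min_le_right _ _)
  -- M₀ : map sending C onto Q₃ and killing W
  obtain ⟨CmC, hCmC, hWCmC⟩ := exists_isCompl_le (K := K) C W hCW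
  set projC := Submodule.linearProjOfIsCompl C CmC hCmC with hprojC
  obtain ⟨ξC, hξC⟩ := exists_range_eq (K := K) (V₁ := ↥C) Q₃
    (by rw [hQ₃dim]; exact min_le_left _ _)
  set M₀ := ξC ∘ₗ projC with hM₀
  have hM₀W : ∀ w ∈ W, M₀ w = 0 := by
    intro w hw
    have h0 : projC w = 0 := (Submodule.projectionOnto_apply_eq_zero_iff hCmC).2 (hWCmC hw)
    simp [hM₀, h0]
  have hM₀C : ∀ (c) (hc : c ∈ C), M₀ c = ξC ⟨c, hc⟩ := by
    intro c hc
    have h0 : projC c = ⟨c, hc⟩ := Submodule.linearProjOfIsCompl_apply_left hCmC ⟨c, hc⟩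
    simp [hM₀, h0]
  -- φ and α
  set φ := (σ ∘ₗ Submodule.inclusion hWU ∘ₗ π) + M₀ with hφ
  set α := φ ∘ₗ g + ξ with hα
  refine ⟨α, ?_, ?_⟩
  · -- rank of α is large
    have hξvanish : ∀ v₀ : Fin N → K, ξ (v₀ - (ker g).subtype (projg v₀)) = 0 := by
      intro v₀
      have h0 : projg ((projg v₀ : Fin N → K)) = projg v₀ :=
        Submodule.linearProjOfIsCompl_apply_left hG' (projg v₀)
      simp [hξ, map_sub, h0]
    have hgfix : ∀ v₀ : Fin N → K, g (v₀ - (ker g).subtype (projg v₀)) = g v₀ := by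
      intro v₀
      have h0 : g ((ker g).subtype (projg v₀)) = 0 := (projg v₀).2
      simp [map_sub, h0]
    have hSWle : SW ≤ range α := by
      rintro _ ⟨w, rfl⟩
      rcases hWV w.2 with ⟨v₀, hv₀⟩
      refine ⟨v₀ - (ker g).subtype (projg v₀), ?_⟩
      have hπw : π ((w : Fin m → K)) = w := Submodule.linearProjOfIsCompl_apply_left hCm w
      have hM₀w : M₀ ((w : Fin m → K)) = 0 := hM₀W _ w.2
      simp only [hα, LinearMap.add_apply, LinearMap.comp_apply, hξvanish v₀, add_zero,
        hgfix v₀, hv₀, hφ, hπw, hM₀w]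
    have hQ''le : Q'' ≤ range α := by
      intro q hq
      rw [← hξK] at hq
      rcases hq with ⟨k', rfl⟩
      refine ⟨(ker g).subtype k', ?_⟩
      have h0 : g ((ker g).subtype k') = 0 := k'.2
      have h1 : projg ((k' : Fin N → K)) = k' :=
        Submodule.linearProjOfIsCompl_apply_left hG' k'
      simp [hα, hξ, h0, h1]
    have hQ₃le : Q₃ ≤ range α := by
      intro q hq
      rw [← hξC] at hq
      rcases hq with ⟨c, rfl⟩
      rcases c.2 with ⟨v₁, hv₁V, hv₁⟩
      rcases hv₁V with ⟨v₀, hv₀⟩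
      have hM₀v₁ : M₀ v₁ = ξC c := by
        have hsplit : M₀ (ψ₀ v₁) = M₀ v₁ - M₀ ((π v₁ : Fin m → K)) := by
          simp [hψ₀, map_sub]
        have hz : M₀ ((π v₁ : Fin m → K)) = 0 := hM₀W _ (hπW v₁)
        have hc : M₀ (ψ₀ v₁) = ξC ⟨ψ₀ v₁, ⟨v₁, ⟨v₀, hv₀⟩, rfl⟩⟩ :=
          hM₀C _ ⟨v₁, ⟨v₀, hv₀⟩, rfl⟩
        rw [hsplit, hz, sub_zero] at hc
        rw [hc]
        congr 1
        exact Subtype.ext hv₁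
      have hαv' : α (v₀ - (ker g).subtype (projg v₀)) =
          σ (Submodule.inclusion hWU (π v₁)) + ξC c := by
        simp only [hα, LinearMap.add_apply, LinearMap.comp_apply, hξvanish v₀, add_zero,
          hgfix v₀, hv₀, hφ, hM₀v₁]
      have : ξC c = α (v₀ - (ker g).subtype (projg v₀)) - σ (Submodule.inclusion hWU (π v₁)) := by
        rw [hαv']; abel
      rw [this]
      exact Submodule.sub_mem _ ⟨_, rfl⟩ (hSWle ⟨π v₁, rfl⟩)
    have hle : SWQ ⊔ Q₃ ≤ range α := sup_le (sup_le hSWle hQ''le) hQ₃le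
    have hdisj : SWQ ⊓ Q₃ = ⊥ := by
      rw [eq_bot_iff, ← hCn₃.inf_eq_bot]
      exact inf_le_inf_left _ hQ₃Cn₃
    have h1 := Submodule.finrank_sup_add_finrank_inf_eq SWQ Q₃
    rw [hdisj] at h1
    simp only [finrank_bot] at h1
    have h2 := Submodule.finrank_mono hle
    omega
  · -- the rank of g - f ∘ α is small
    set θ := (LinearMap.id : (Fin m → K) →ₗ[K] (Fin m → K)) - f ∘ₗ M₀ with hθ
    have hid1 : ∀ u : Fin m → K, u - f (φ u) = θ (ψ₀ u) := by
      intro u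
      have h2 : M₀ ((π u : Fin m → K)) = 0 := hM₀W _ (hπW u)
      have h3 : ψ₀ u = u - ((π u : Fin m → K)) := by simp [hψ₀]
      have h4 : f (φ u) = ((π u : Fin m → K)) + f (M₀ u) := by
        simp only [hφ, LinearMap.add_apply, LinearMap.comp_apply, map_add, hσ,
          Submodule.coe_inclusion]
      have h5 : θ (ψ₀ u) = ψ₀ u - f (M₀ (ψ₀ u)) := by
        simp [hθ]
      have h6 : M₀ (ψ₀ u) = M₀ u := by rw [h3, map_sub, h2, sub_zero]
      rw [h5, h6, h4, h3]
      abel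
    have hZle : range (g - f ∘ₗ α) ≤
        Submodule.map θ C ⊔ Submodule.map f Q'' := by
      rintro _ ⟨v, rfl⟩
      have hval : (g - f ∘ₗ α) v = θ (ψ₀ (g v)) - f (ξ v) := by
        rw [← hid1 (g v)]
        simp only [LinearMap.sub_apply, LinearMap.comp_apply, hα, LinearMap.add_apply, map_add]
        abel
      rw [hval]
      apply Submodule.sub_mem
      · exact Submodule.mem_sup_left ⟨ψ₀ (g v), ⟨g v, ⟨v, rfl⟩, rfl⟩, rfl⟩
      · refine Submodule.mem_sup_right ⟨ξ v, ?_, rfl⟩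
        have hm : ξ v ∈ range ξK := ⟨projg v, rfl⟩
        rwa [hξK] at hm
    have h1 : finrank K ↥(Submodule.map θ C) ≤ finrank K ↥C :=
      Submodule.finrank_map_le _ _
    have h2 : Submodule.map f Q'' ≤ U₂ := le_trans (Submodule.map_mono hQ''Q') hmapQ'
    have h3 : finrank K ↥(Submodule.map f Q'') ≤ e := hU₂dim ▸ Submodule.finrank_mono h2
    have h4 := Submodule.finrank_sup_add_finrank_inf_eq
      (Submodule.map θ C) (Submodule.map f Q'')
    have h5 := Submodule.finrank_mono hZle
    omega

end Helpers

/-- The subspace distance between two subspaces of `𝔽_q^m`: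
`d_S(U,V) = dim (U + V) − dim (U ∩ V)`. -/
noncomputable def subDist {K : Type*} [Field K] {m : ℕ}
    (U V : Submodule K (Fin m → K)) : ℕ :=
  Module.finrank K ↥(U ⊔ V) - Module.finrank K ↥(U ⊓ V)

/-- For `N ≥ n − ρ`,
`2Δ_ρ(X,Y) = d_S(⟨X⟩,⟨Y⟩) − ρ + |rank X − rank Y − ρ|`, over the integers. -/
theorem two_discRho_eq {K : Type*} [Field K] [Fintype K] {n m N : ℕ}
    (hn : 0 < n) (hm : 0 < m) (hN : 0 < N) (ρ : ℕ) (hNρ : n - ρ ≤ N)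
    (X : Matrix (Fin n) (Fin m) K) (Y : Matrix (Fin N) (Fin m) K) :
    2 * (discRho ρ X Y : ℤ) =
      (subDist (rowSpace X) (rowSpace Y) : ℤ) - ρ
        + |(X.rank : ℤ) - (Y.rank : ℤ) - ρ| := by
  classical
  set f := X.vecMulLinear with hf
  set g := Y.vecMulLinear with hg
  set U := range f with hU
  set V := range g with hV
  set x := finrank K ↥U with hx
  set y := finrank K ↥V with hy
  set t := finrank K ↥(U ⊓ V) with ht
  have hrowX : rowSpace X = U := by rw [rowSpace, hU, hf, range_vecMulLinear]; rfl
  have hrowY : rowSpace Y = V := by rw [rowSpace, hV, hg, range_vecMulLinear]; rfl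
  have hrankX : X.rank = x := by
    rw [X.rank_eq_finrank_span_row, hx, hU, hf, range_vecMulLinear]
  have hrankY : Y.rank = y := by
    rw [Y.rank_eq_finrank_span_row, hy, hV, hg, range_vecMulLinear]
  have hrankA : ∀ A : Matrix (Fin N) (Fin n) K,
      A.rank = finrank K ↥(range A.vecMulLinear) := by
    intro A
    rw [A.rank_eq_finrank_span_row, range_vecMulLinear]
  have hbridge : ∀ A : Matrix (Fin N) (Fin n) K,
      (Y - A * X).vecMulLinear = g - f ∘ₗ A.vecMulLinear := by
    intro A
    apply LinearMap.ext
    intro v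
    simp only [Matrix.vecMulLinear_apply, LinearMap.sub_apply, LinearMap.comp_apply, hf, hg]
    rw [Matrix.vecMul_sub, ← Matrix.vecMul_vecMul]
  have htx : t ≤ x := Submodule.finrank_mono inf_le_left
  have hty : t ≤ y := Submodule.finrank_mono inf_le_right
  have hxn : x ≤ n := by
    have h0 := LinearMap.finrank_range_add_finrank_ker f
    rw [Module.finrank_fin_fun, ← hU] at h0
    omega
  set D := y - t + (x - ρ - y) with hD
  set S := {r : ℕ | ∃ A : Matrix (Fin N) (Fin n) K, n - ρ ≤ A.rank ∧ r = (Y - A * X).rank}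
    with hS
  have hlow : ∀ r ∈ S, D ≤ r := by
    rintro r ⟨A, hA, rfl⟩
    obtain ⟨h1, h2⟩ := lower_bound f g A.vecMulLinear
    rw [← hU, ← hV] at h1 h2
    rw [hrankA] at hA
    have hz : (Y - A * X).rank = finrank K ↥(range (g - f ∘ₗ A.vecMulLinear)) := by
      rw [(Y - A * X).rank_eq_finrank_span_row, ← range_vecMulLinear, hbridge]
    rw [hz]
    omega
  have hmem : D ∈ S := by
    obtain ⟨α, hα1, hα2⟩ := exists_good ρ hNρ f g
    set A := LinearMap.toMatrixRight' α with hA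
    have hAα : A.vecMulLinear = α := LinearMap.toMatrixRight'.symm_apply_apply α
    obtain ⟨h1, h2⟩ := lower_bound f g α
    rw [← hU, ← hV] at h1 h2 hα2
    have hz : (Y - A * X).rank = finrank K ↥(range (g - f ∘ₗ α)) := by
      rw [(Y - A * X).rank_eq_finrank_span_row, ← range_vecMulLinear, hbridge, hAα]
    refine ⟨A, ?_, ?_⟩
    · rw [hrankA, hAα]; exact hα1
    · rw [hz]; omega
  have hdisc : discRho ρ X Y = D :=
    le_antisymm (Nat.sInf_le hmem) (le_csInf ⟨D, hmem⟩ hlow)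
  have hsup := Submodule.finrank_sup_add_finrank_inf_eq U V
  have hsubd : subDist (rowSpace X) (rowSpace Y) = finrank K ↥(U ⊔ V) - t := by
    rw [subDist, hrowX, hrowY, ht]
  rw [hdisc, hsubd, hrankX, hrankY, hD]
  rcases le_total ((x : ℤ) - y - ρ) 0 with h | h
  · rw [abs_of_nonpos h]; omega
  · rw [abs_of_nonneg h]; omega
end

section
/- Suppose the discrepancy function Δ of an adversarial channel is normal, let t ∈ ℕ, and let 𝒞 ⊆ 𝒳 be a code with at least two codewords such that t ≤ δ(𝒞). Then the discrepancy-detection capability satisfies σ^t(𝒞) = δ(𝒞) − t − 1, where σ^t(𝒞) = min over pairs of distinct codewords x, x' ∈ 𝒞 of σ^t(x,x'). -/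
/-- The Δ-distance `δ(x,x') = min_y (Δ(x,y) + Δ(x',y))`. -/
noncomputable def deltaPair {𝒳 𝒴 : Type*} (Δ : 𝒳 → 𝒴 → ℕ) (x x' : 𝒳) : ℕ :=
  sInf {e : ℕ | ∃ y : 𝒴, e = Δ x y + Δ x' y}

/-- `δ(𝒞)`: the minimum Δ-distance over pairs of distinct codewords. -/
noncomputable def deltaCode {𝒳 𝒴 : Type*} (Δ : 𝒳 → 𝒴 → ℕ) (C : Set 𝒳) : ℕ :=
  sInf {e : ℕ | ∃ x ∈ C, ∃ x' ∈ C, x ≠ x' ∧ e = deltaPair Δ x x'}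

/-- A discrepancy function `Δ` is normal if for all `x, x'` and all
`0 ≤ i ≤ δ(x,x')` there is an output `y` with `Δ(x,y) = i` and
`Δ(x',y) = δ(x,x') − i`. -/
def IsNormal {𝒳 𝒴 : Type*} (Δ : 𝒳 → 𝒴 → ℕ) : Prop :=
  ∀ x x' : 𝒳, ∀ i : ℕ, i ≤ deltaPair Δ x x' →
    ∃ y : 𝒴, Δ x y = i ∧ Δ x' y = deltaPair Δ x x' - i

/-- `σ^t(x,x') + 1 = min { Δ(x,y) : y ∈ 𝒴, Δ(x',y) ≤ t }`. -/
noncomputable def sigmaPairSucc {𝒳 𝒴 : Type*} (Δ : 𝒳 → 𝒴 → ℕ) (t : ℕ) (x x' : 𝒳) : ℕ :=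
  sInf {e : ℕ | ∃ y : 𝒴, Δ x' y ≤ t ∧ e = Δ x y}

/-- `σ^t(𝒞) = (min over distinct pairs of codewords of (σ^t(x,x')+1)) − 1`,
as an integer; this is the minimum of `σ^t(x,x')` over distinct pairs. -/
noncomputable def sigmaCode {𝒳 𝒴 : Type*} (Δ : 𝒳 → 𝒴 → ℕ) (t : ℕ) (C : Set 𝒳) : ℤ :=
  ((sInf {e : ℕ | ∃ x ∈ C, ∃ x' ∈ C, x ≠ x' ∧ e = sigmaPairSucc Δ t x x'} : ℕ) : ℤ) - 1

lemma deltaPair_le {𝒳 𝒴 : Type*} (Δ : 𝒳 → 𝒴 → ℕ) (x x' : 𝒳) (y : 𝒴) :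
    deltaPair Δ x x' ≤ Δ x y + Δ x' y :=
  Nat.sInf_le ⟨y, rfl⟩

lemma sigmaPairSucc_eq {𝒳 𝒴 : Type*} (Δ : 𝒳 → 𝒴 → ℕ) (hΔ : IsNormal Δ)
    (t : ℕ) (x x' : 𝒳) (h : t ≤ deltaPair Δ x x') :
    sigmaPairSucc Δ t x x' = deltaPair Δ x x' - t := by
  obtain ⟨y, hy1, hy2⟩ := hΔ x x' (deltaPair Δ x x' - t) (Nat.sub_le _ _)
  have hy2' : Δ x' y ≤ t := by omega
  apply le_antisymm
  · exact Nat.sInf_le ⟨y, hy2', hy1.symm⟩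
  · apply le_csInf
    · exact ⟨Δ x y, y, hy2', rfl⟩
    rintro e ⟨z, hz, rfl⟩
    have := deltaPair_le Δ x x' z
    omega

/-- If `Δ` is normal, `t ∈ ℕ` and `𝒞` has at least two codewords with
`t ≤ δ(𝒞)`, then the detection capability satisfies
`σ^t(𝒞) = δ(𝒞) − t − 1`. -/
theorem sigmaCode_eq {𝒳 𝒴 : Type*} [Fintype 𝒳] [Fintype 𝒴]
    [Nonempty 𝒳] [Nonempty 𝒴] (Δ : 𝒳 → 𝒴 → ℕ) (hΔ : IsNormal Δ) (t : ℕ)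
    (C : Set 𝒳) (hC : ∃ x ∈ C, ∃ x' ∈ C, x ≠ x') (ht : t ≤ deltaCode Δ C) :
    sigmaCode Δ t C = (deltaCode Δ C : ℤ) - t - 1 := by
  obtain ⟨a, ha, b, hb, hab⟩ := hC
  have hne : {e : ℕ | ∃ x ∈ C, ∃ x' ∈ C, x ≠ x' ∧ e = deltaPair Δ x x'}.Nonempty :=
    ⟨deltaPair Δ a b, a, ha, b, hb, hab, rfl⟩
  have hpair : ∀ x ∈ C, ∀ x' ∈ C, x ≠ x' → deltaCode Δ C ≤ deltaPair Δ x x' :=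
    fun x hx x' hx' hxx' => Nat.sInf_le ⟨x, hx, x', hx', hxx', rfl⟩
  have key : sInf {e : ℕ | ∃ x ∈ C, ∃ x' ∈ C, x ≠ x' ∧ e = sigmaPairSucc Δ t x x'}
      = deltaCode Δ C - t := by
    apply le_antisymm
    · obtain ⟨x, hx, x', hx', hxx', hd⟩ := Nat.sInf_mem hne
      have := sigmaPairSucc_eq Δ hΔ t x x' (by rw [← hd]; exact ht)
      refine le_trans (Nat.sInf_le ⟨x, hx, x', hx', hxx', this.symm⟩) ?_
      unfold deltaCode; omega
    · apply le_csInf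
      · exact ⟨sigmaPairSucc Δ t a b, a, ha, b, hb, hab, rfl⟩
      rintro e ⟨x, hx, x', hx', hxx', rfl⟩
      have h1 := hpair x hx x' hx' hxx'
      rw [sigmaPairSucc_eq Δ hΔ t x x' (le_trans ht h1)]
      omega
  unfold sigmaCode
  rw [key]
  have : (↑(deltaCode Δ C - t) : ℤ) = (deltaCode Δ C : ℤ) - t := by
    push_cast [Nat.cast_sub ht]; ring
  omega
end
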